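/- Let G be a daisy cube of dimension n, i.e., the subgraph of the hypercube Q_n induced by a nonempty downward-closed vertex set V ⊆ {0,1}^n, and let uv be an edge of G using direction i with u_i = 0 (so v_i = 1). Then n_{u,v} = |W_{(i,0)}(G)| and n_{v,u} = |W_{(i,1)}(G)|; in particular n_{u,v} ≥ n_{v,u}, so the contribution |n_{u,v} − n_{v,u}| of the edge uv to the Mostar index equals |W_{(i,0)}(G)| − |W_{(i,1)}(G)|. -/

import Mathlib

/-- Vertices of the hypercube `Q_n`: binary strings of length `n`. -/
abbrev Vtx (n : ℕ) := Fin n → Bool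

/-- The subgraph of the hypercube `Q_n` induced by a set `V` of vertices:
two vertices are adjacent iff they differ in precisely one coordinate
(i.e. their Hamming distance is `1`). -/
def cubeGraph {n : ℕ} (V : Finset (Vtx n)) : SimpleGraph {u : Vtx n // u ∈ V} where
  Adj u v := hammingDist u.1 v.1 = 1
  symm := ⟨fun u v h => (hammingDist_comm v.1 u.1).trans h⟩
  loopless := ⟨fun u h => by simp [hammingDist_self] at h⟩

instance {n : ℕ} {V : Finset (Vtx n)} : DecidableRel (cubeGraph V).Adj :=
  fun u v => inferInstanceAs (Decidable (hammingDist u.1 v.1 = 1))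

/-- A set of vertices of `Q_n` is downward closed if `u ≤ v` componentwise
and `v ∈ V` imply `u ∈ V`. -/
def DownClosed {n : ℕ} (V : Finset (Vtx n)) : Prop :=
  ∀ u v : Vtx n, (∀ i, u i ≤ v i) → v ∈ V → u ∈ V

/-- `closerCount G u v` is the number of vertices of `G` strictly closer
(in graph distance) to `u` than to `v`. -/
noncomputable def closerCount {α : Type*} (G : SimpleGraph α) (u v : α) : ℕ :=
  Nat.card {w : α // G.dist w u < G.dist w v}

/-- The semicube `W_{(i,χ)}`: vertices of the induced subgraph on `V`
whose `i`-th coordinate equals `χ` (`false` codes `0`, `true` codes `1`). -/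
def semicube {n : ℕ} (V : Finset (Vtx n)) (i : Fin n) (χ : Bool) : Finset (Vtx n) :=
  V.filter (fun u => u i = χ)

lemma hd_succ {n : ℕ} {x y : Vtx n} {i : Fin n} (hagree : ∀ j, j ≠ i → x j = y j)
    (hne : x i ≠ y i) (a : Vtx n) (hai : a i = x i) :
    hammingDist a y = hammingDist a x + 1 := by
  have hset : (Finset.univ.filter fun j => a j ≠ y j) =
      insert i (Finset.univ.filter fun j => a j ≠ x j) := by
    ext j
    by_cases hj : j = i
    · subst hj
      simp [hai, hne]
    · simp [hj, hagree j hj]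
  have hmem : i ∉ (Finset.univ.filter fun j => a j ≠ x j) := by simp [hai]
  show (Finset.univ.filter fun j => a j ≠ y j).card = _
  rw [hset, Finset.card_insert_of_notMem hmem]
  rfl

lemma hd_update_eq_one {n : ℕ} (w : Vtx n) (j : Fin n) (c : Bool) (h : w j ≠ c) :
    hammingDist w (Function.update w j c) = 1 := by
  have hset : (Finset.univ.filter fun k => w k ≠ Function.update w j c k) = {j} := by
    ext k
    by_cases hk : k = j
    · subst hk; simp [h]
    · simp [hk, Function.update_of_ne hk]
  show (Finset.univ.filter fun k => w k ≠ Function.update w j c k).card = 1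
  rw [hset]; rfl

lemma hamming_le_length {n : ℕ} {V : Finset (Vtx n)} {a b : {x : Vtx n // x ∈ V}}
    (p : (cubeGraph V).Walk a b) : hammingDist a.1 b.1 ≤ p.length := by
  induction p with
  | nil => simp [hammingDist_self]
  | @cons a c b h p ih =>
    have := hammingDist_triangle a.1 c.1 b.1
    have hac : hammingDist a.1 c.1 = 1 := h
    simp only [SimpleGraph.Walk.length_cons]
    omega

lemma exists_walk {n : ℕ} {V : Finset (Vtx n)} (hdc : DownClosed V) :
    ∀ (k : ℕ) (w u : Vtx n) (hw : w ∈ V) (hu : u ∈ V), hammingDist w u = k →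
    ∃ p : (cubeGraph V).Walk ⟨w, hw⟩ ⟨u, hu⟩, p.length = k := by
  intro k
  induction k with
  | zero =>
    intro w u hw hu h
    have := eq_of_hammingDist_eq_zero h
    subst this
    exact ⟨.nil, rfl⟩
  | succ k ih =>
    intro w u hw hu h
    have hne : w ≠ u := by
      intro e; subst e; simp [hammingDist_self] at h
    obtain ⟨j, hj⟩ := Function.ne_iff.mp hne
    by_cases hwj : w j = true
    · set w' := Function.update w j (u j) with hw'def
      have hle : ∀ k, w' k ≤ w k := by
        intro k
        by_cases hk : k = j
        · subst hk
          simp only [hw'def, Function.update_self]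
          cases u k <;> simp [hwj]
        · simp [hw'def, Function.update_of_ne hk]
      have hw' : w' ∈ V := hdc w' w hle hw
      have hd1 : hammingDist u w = hammingDist u w' + 1 :=
        hd_succ (x := w') (y := w) (i := j)
          (fun k hk => by simp [hw'def, Function.update_of_ne hk])
          (by simp only [hw'def, Function.update_self]; exact fun e => hj e.symm)
          u (by simp [hw'def])
      have hd2 : hammingDist w' u = k := by
        rw [hammingDist_comm w u] at h
        rw [hammingDist_comm]
        omega
      have hadj : (cubeGraph V).Adj ⟨w, hw⟩ ⟨w', hw'⟩ :=
        hd_update_eq_one w j (u j) hj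
      obtain ⟨p, hp⟩ := ih w' u hw' hu hd2
      exact ⟨.cons hadj p, by simp [hp]⟩
    · have huj : u j = true := by
        cases hu1 : u j
        · exfalso; apply hj; rw [hu1]; simpa using hwj
        · rfl
      set u' := Function.update u j (w j) with hu'def
      have hle : ∀ k, u' k ≤ u k := by
        intro k
        by_cases hk : k = j
        · subst hk
          simp only [hu'def, Function.update_self, huj]
          cases w k <;> simp
        · simp [hu'def, Function.update_of_ne hk]
      have hu' : u' ∈ V := hdc u' u hle hu
      have hd1 : hammingDist w u = hammingDist w u' + 1 :=
        hd_succ (x := u') (y := u) (i := j)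
          (fun k hk => by simp [hu'def, Function.update_of_ne hk])
          (by simp only [hu'def, Function.update_self]; exact fun e => hj e)
          w (by simp [hu'def])
      have hd2 : hammingDist w u' = k := by omega
      have hadj : (cubeGraph V).Adj ⟨u', hu'⟩ ⟨u, hu⟩ := by
        show hammingDist u' u = 1
        rw [hammingDist_comm]
        exact hd_update_eq_one u j (w j) (fun e => hj e.symm)
      obtain ⟨p, hp⟩ := ih w u' hw hu' hd2
      exact ⟨p.concat hadj, by simp [hp]⟩

lemma dist_eq_hamming {n : ℕ} {V : Finset (Vtx n)} (hdc : DownClosed V)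
    (w u : {x : Vtx n // x ∈ V}) :
    (cubeGraph V).dist w u = hammingDist w.1 u.1 := by
  obtain ⟨p, hp⟩ := exists_walk hdc (hammingDist w.1 u.1) w.1 u.1 w.2 u.2 rfl
  apply le_antisymm
  · exact hp ▸ SimpleGraph.dist_le p
  · have hr : (cubeGraph V).Reachable w u := ⟨p⟩
    obtain ⟨q, hq⟩ := hr.exists_walk_length_eq_dist
    rw [← hq]; exact hamming_le_length q


lemma nat_card_semicube {n : ℕ} (V : Finset (Vtx n)) (i : Fin n) (b : Bool) :
    Nat.card {w : {x : Vtx n // x ∈ V} // w.1 i = b} = (semicube V i b).card := by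
  have e : {w : {x : Vtx n // x ∈ V} // w.1 i = b} ≃ {x : Vtx n // x ∈ semicube V i b} :=
    { toFun := fun w => ⟨w.1.1, Finset.mem_filter.mpr ⟨w.1.2, w.2⟩⟩
      invFun := fun x => ⟨⟨x.1, (Finset.mem_filter.mp x.2).1⟩, (Finset.mem_filter.mp x.2).2⟩
      left_inv := fun w => rfl
      right_inv := fun x => rfl }
  rw [Nat.card_congr e, Nat.card_eq_fintype_card, Fintype.card_coe]

lemma semicube_card_le {n : ℕ} {V : Finset (Vtx n)} (hdc : DownClosed V) (i : Fin n) :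
    (semicube V i true).card ≤ (semicube V i false).card := by
  apply Finset.card_le_card_of_injOn (fun w => Function.update w i false)
  · intro w hw
    obtain ⟨hwV, hwi⟩ := Finset.mem_filter.mp hw
    refine Finset.mem_filter.mpr ⟨hdc _ w ?_ hwV, Function.update_self i false w⟩
    intro k
    by_cases hk : k = i
    · subst hk; simp
    · simp [Function.update_of_ne hk]
  · intro w hw w' hw' heq
    obtain ⟨_, hwi⟩ := Finset.mem_filter.mp hw
    obtain ⟨_, hwi'⟩ := Finset.mem_filter.mp hw'
    funext k
    by_cases hk : k = i
    · subst hk; rw [hwi, hwi']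
    · have := congrFun heq k
      simpa [Function.update_of_ne hk] using this


/-- In a daisy cube, for an edge `uv` using direction `i` with
`u_i = 0` (so `v_i = 1`): `n_{u,v} = |W_{(i,0)}(G)|`, `n_{v,u} = |W_{(i,1)}(G)|`,
in particular `n_{u,v} ≥ n_{v,u}`, and the contribution `|n_{u,v} - n_{v,u}|` of the
edge `uv` to the Mostar index equals `|W_{(i,0)}(G)| - |W_{(i,1)}(G)|`. -/
theorem daisy_edge_mostar_contribution {n : ℕ} (V : Finset (Vtx n))
    (hne : V.Nonempty) (hdc : DownClosed V) (i : Fin n)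
    (u v : {x : Vtx n // x ∈ V}) (hadj : (cubeGraph V).Adj u v)
    (hdir : u.1 i ≠ v.1 i) (hui : u.1 i = false) :
    closerCount (cubeGraph V) u v = (semicube V i false).card ∧
      closerCount (cubeGraph V) v u = (semicube V i true).card ∧
      closerCount (cubeGraph V) v u ≤ closerCount (cubeGraph V) u v ∧
      (((closerCount (cubeGraph V) u v : ℤ) - (closerCount (cubeGraph V) v u : ℤ)).natAbs : ℤ) =
        ((semicube V i false).card : ℤ) - ((semicube V i true).card : ℤ) := by
  have hvi : v.1 i = true := by
    cases h : v.1 i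
    · exact absurd (hui.trans h.symm) hdir
    · rfl
  have hc : (Finset.univ.filter fun j => u.1 j ≠ v.1 j).card = 1 := hadj
  obtain ⟨a, ha⟩ := Finset.card_eq_one.mp hc
  have hia : i = a := by
    have : i ∈ (Finset.univ.filter fun j => u.1 j ≠ v.1 j) := by simp [hdir]
    rw [ha] at this
    exact Finset.mem_singleton.mp this
  have hagree : ∀ j, j ≠ i → u.1 j = v.1 j := by
    intro j hj
    by_contra hcon
    have : j ∈ (Finset.univ.filter fun k => u.1 k ≠ v.1 k) := by simp [hcon]
    rw [ha] at this
    exact hj (Finset.mem_singleton.mp this ▸ hia.symm ▸ rfl)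
  have hrel : ∀ w : {x : Vtx n // x ∈ V},
      (w.1 i = false → hammingDist w.1 v.1 = hammingDist w.1 u.1 + 1) ∧
      (w.1 i = true → hammingDist w.1 u.1 = hammingDist w.1 v.1 + 1) := by
    intro w
    constructor
    · intro hwi
      exact hd_succ (x := u.1) (y := v.1) (i := i) hagree hdir w.1 (hwi.trans hui.symm)
    · intro hwi
      exact hd_succ (x := v.1) (y := u.1) (i := i) (fun j hj => (hagree j hj).symm)
        (fun e => hdir e.symm) w.1 (hwi.trans hvi.symm)
  have key1 : ∀ w : {x : Vtx n // x ∈ V},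
      ((cubeGraph V).dist w u < (cubeGraph V).dist w v ↔ w.1 i = false) := by
    intro w
    rw [dist_eq_hamming hdc, dist_eq_hamming hdc]
    cases hwi : w.1 i
    · have := (hrel w).1 hwi
      simp [this]
    · have := (hrel w).2 hwi
      simp only [Bool.true_eq_false, iff_false, not_lt]
      omega
  have key2 : ∀ w : {x : Vtx n // x ∈ V},
      ((cubeGraph V).dist w v < (cubeGraph V).dist w u ↔ w.1 i = true) := by
    intro w
    rw [dist_eq_hamming hdc, dist_eq_hamming hdc]
    cases hwi : w.1 i
    · have := (hrel w).1 hwi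
      simp only [Bool.false_eq_true, iff_false, not_lt]
      omega
    · have := (hrel w).2 hwi
      simp [this]
  have h1 : closerCount (cubeGraph V) u v = (semicube V i false).card := by
    rw [show closerCount (cubeGraph V) u v =
        Nat.card {w : {x : Vtx n // x ∈ V} // w.1 i = false} from
      Nat.card_congr (Equiv.subtypeEquivRight key1)]
    exact nat_card_semicube V i false
  have h2 : closerCount (cubeGraph V) v u = (semicube V i true).card := by
    rw [show closerCount (cubeGraph V) v u =
        Nat.card {w : {x : Vtx n // x ∈ V} // w.1 i = true} from
      Nat.card_congr (Equiv.subtypeEquivRight key2)]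
    exact nat_card_semicube V i true
  have h3 := semicube_card_le hdc i
  refine ⟨h1, h2, ?_, ?_⟩
  · omega
  · rw [h1, h2]
    omega
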